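/- Let X be a real Banach space with dual X*, let F : X → X* be Fréchet differentiable, and let û ∈ X be given with F'_{û} invertible. Suppose there exists α > 0 with ‖F'^{-1}_{û} F(û)‖_X ≤ α, and there exist δ > 0 and β > 0 such that ‖F'^{-1}_{û}(F'_v − F'_w)‖_{𝓛(X,X)} ≤ β ‖v − w‖_X for all v, w in the open ball D = B(û, 2α + δ). If αβ ≤ 1/2, then there exists a solution u ∈ X of F(u) = 0 in the closed ball B̄(û, ρ) with ρ = (1 − √(1 − 2αβ))/β; moreover, this solution is unique in the closed ball B̄(û, 2α). -/

import Mathlib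

/-!
STATEMENT 1: Newton–Kantorovich theorem in a real Banach space `X` with dual `X*`.
-/

open Metric
open Set

lemma seg_est {X : Type*} [NormedAddCommGroup X] [NormedSpace ℝ X]
    (Φ : X → X) (Φ' : X → X →L[ℝ] X) (hΦ : ∀ x, HasFDerivAt Φ (Φ' x) x)
    (uhat : X) (β R : ℝ) (hβ0 : 0 ≤ β)
    (hbound : ∀ x, ‖x - uhat‖ ≤ R → ‖Φ' x‖ ≤ β * ‖x - uhat‖)
    (v w : X) (hv : ‖v - uhat‖ ≤ R) (hw : ‖w - uhat‖ ≤ R) :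
    ‖Φ v - Φ w‖ ≤ β / 2 * (‖v - uhat‖ + ‖w - uhat‖) * ‖v - w‖ := by
  set a := ‖v - uhat‖
  set b := ‖w - uhat‖
  set c := ‖v - w‖
  have ha0 : 0 ≤ a := norm_nonneg _
  have hb0 : 0 ≤ b := norm_nonneg _
  have hc0 : 0 ≤ c := norm_nonneg _
  set x : ℝ → X := fun t => w + t • (v - w) with hxdef
  have hline : ∀ t : ℝ, HasDerivAt x (v - w) t := by
    intro t
    simpa [x] using ((hasDerivAt_id t).smul_const (v - w)).const_add w
  set g : ℝ → X := fun t => Φ (x t) - Φ (x 0) with hgdef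
  set g' : ℝ → X := fun t => Φ' (x t) (v - w) with hg'def
  have hg : ∀ t : ℝ, HasDerivAt g (g' t) t := by
    intro t
    exact (((hΦ (x t)).comp_hasDerivAt t (hline t)).sub_const _)
  set B : ℝ → ℝ := fun t => c * β * (b * t + (a - b) * (t ^ 2 / 2)) with hBdef
  set B' : ℝ → ℝ := fun t => c * β * (b + (a - b) * t) with hB'def
  have hB : ∀ t, HasDerivAt B (B' t) t := by
    intro t
    have := ((hasDerivAt_pow 2 t).div_const 2).const_mul (a - b)
    have h2 := (((hasDerivAt_id t).const_mul b).add this).const_mul (c * β)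
    refine h2.congr_deriv ?_
    show _ = c * β * (b + (a - b) * t)
    norm_num
  have hseg : ∀ t ∈ Icc (0:ℝ) 1, ‖x t - uhat‖ ≤ (1 - t) * b + t * a := by
    intro t ht
    have : x t - uhat = (1 - t) • (w - uhat) + t • (v - uhat) := by
      simp only [x]
      module
    rw [this]
    calc ‖(1 - t) • (w - uhat) + t • (v - uhat)‖
        ≤ ‖(1 - t) • (w - uhat)‖ + ‖t • (v - uhat)‖ := norm_add_le _ _
      _ = (1 - t) * b + t * a := by
          rw [norm_smul, norm_smul, Real.norm_eq_abs, Real.norm_eq_abs,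
            abs_of_nonneg (by linarith [ht.2]), abs_of_nonneg ht.1]
  have bound : ∀ t ∈ Ico (0:ℝ) 1, ‖g' t‖ ≤ B' t := by
    intro t ht
    have ht' : t ∈ Icc (0:ℝ) 1 := ⟨ht.1, le_of_lt ht.2⟩
    have hxt : ‖x t - uhat‖ ≤ R := by
      calc ‖x t - uhat‖ ≤ (1 - t) * b + t * a := hseg t ht'
        _ ≤ (1 - t) * R + t * R := by
            nlinarith [ht.1, ht.2.le, hv, hw]
        _ = R := by ring
    calc ‖g' t‖ ≤ ‖Φ' (x t)‖ * c := (Φ' (x t)).le_opNorm _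
      _ ≤ (β * ‖x t - uhat‖) * c := by
          have := hbound (x t) hxt
          exact mul_le_mul_of_nonneg_right this hc0
      _ ≤ (β * ((1 - t) * b + t * a)) * c := by
          have := hseg t ht'
          have h2 : β * ‖x t - uhat‖ ≤ β * ((1 - t) * b + t * a) :=
            mul_le_mul_of_nonneg_left this hβ0
          exact mul_le_mul_of_nonneg_right h2 hc0
      _ = B' t := by simp only [B']; ring
  have key := image_norm_le_of_norm_deriv_right_le_deriv_boundary
    (f := g) (f' := g') (a := 0) (b := 1)
    (fun t _ => (hg t).continuousAt.continuousWithinAt)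
    (fun t _ => (hg t).hasDerivWithinAt.mono (fun y hy => trivial))
    (by simp [g, B]) hB bound
  have k1 := key (x := 1) ⟨zero_le_one, le_refl 1⟩
  have hx1 : x 1 = v := by simp [x]
  have hx0 : x 0 = w := by simp [x]
  have : ‖Φ v - Φ w‖ ≤ B 1 := by
    rw [← hx1, ← hx0]
    simpa [g] using k1
  calc ‖Φ v - Φ w‖ ≤ B 1 := this
    _ = β / 2 * (a + b) * c := by simp only [B]; ring

set_option maxHeartbeats 2000000 in
/-- **Newton–Kantorovich theorem.**  Let `X` be a real Banach space with dual `X*`,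
`F : X → X*` Fréchet differentiable, `û ∈ X` with `F'_{û}` invertible (with inverse `G`).
If `‖F'⁻¹_{û} F(û)‖ ≤ α`, and `‖F'⁻¹_{û}(F'_v − F'_w)‖ ≤ β ‖v − w‖` for all
`v, w` in the open ball `D = B(û, 2α + δ)`, and `αβ ≤ 1/2`, then there is a solution
`u` of `F(u) = 0` in the closed ball of radius `ρ = (1 − √(1 − 2αβ))/β` about `û`,
which is unique in the closed ball of radius `2α`. -/
theorem newton_kantorovich
    {X : Type*} [NormedAddCommGroup X] [NormedSpace ℝ X] [CompleteSpace X]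
    (F : X → StrongDual ℝ X)
    (F' : X → X →L[ℝ] StrongDual ℝ X)
    (hF : ∀ x, HasFDerivAt F (F' x) x)
    (uhat : X)
    (G : StrongDual ℝ X →L[ℝ] X)
    (hG₁ : ∀ φ, F' uhat (G φ) = φ) (hG₂ : ∀ x, G (F' uhat x) = x)
    (α β δ : ℝ) (hα : 0 < α) (hβ : 0 < β) (hδ : 0 < δ)
    (hα' : ‖G (F uhat)‖ ≤ α)
    (hβ' : ∀ v ∈ ball uhat (2 * α + δ), ∀ w ∈ ball uhat (2 * α + δ),
      ‖G.comp (F' v - F' w)‖ ≤ β * ‖v - w‖)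
    (hαβ : α * β ≤ 1 / 2) :
    ∃ u ∈ closedBall uhat ((1 - Real.sqrt (1 - 2 * α * β)) / β),
      F u = 0 ∧ ∀ u' ∈ closedBall uhat (2 * α), F u' = 0 → u' = u := by
  -- basic real facts
  set s : ℝ := Real.sqrt (1 - 2 * α * β) with hsdef
  have harg : (0:ℝ) ≤ 1 - 2 * α * β := by nlinarith
  have hs2 : s ^ 2 = 1 - 2 * α * β := Real.sq_sqrt harg
  have hs0 : 0 ≤ s := Real.sqrt_nonneg _
  have hs1 : s ≤ 1 := by nlinarith [hs2, hα.le, hβ.le, mul_pos hα hβ]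
  set ρ : ℝ := (1 - s) / β with hρdef
  have hρ0 : 0 ≤ ρ := div_nonneg (by linarith) hβ.le
  have hρfix : α + β / 2 * ρ ^ 2 = ρ := by
    rw [hρdef]
    field_simp [hρdef]
    nlinarith [hs2]
  have hρ2α : ρ ≤ 2 * α := by
    rw [hρdef, div_le_iff₀ hβ]
    nlinarith [hs2]
  -- the simplified Newton map
  set Φ : X → X := fun x => x - G (F x) with hΦdef
  set Φ' : X → X →L[ℝ] X := fun x => G.comp (F' uhat - F' x) with hΦ'def
  have hΦderiv : ∀ x, HasFDerivAt Φ (Φ' x) x := by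
    intro x
    have h1 : HasFDerivAt (fun y => G (F y)) (G.comp (F' x)) x :=
      (G.hasFDerivAt).comp x (hF x)
    have h2 : HasFDerivAt Φ (ContinuousLinearMap.id ℝ X - G.comp (F' x)) x :=
      (hasFDerivAt_id x).sub h1
    have h3 : ContinuousLinearMap.id ℝ X - G.comp (F' x) = Φ' x := by
      ext y
      simp [Φ', hG₂, map_sub]
    rwa [h3] at h2
  have hΦcont : Continuous Φ := by
    have hFc : Continuous F := continuous_iff_continuousAt.2 fun x => (hF x).continuousAt
    exact continuous_id.sub (G.continuous.comp hFc)
  have hΦbound : ∀ x : X, ‖x - uhat‖ ≤ 2 * α → ‖Φ' x‖ ≤ β * ‖x - uhat‖ := by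
    intro x hx
    have hxD : x ∈ ball uhat (2 * α + δ) := by
      rw [mem_ball, dist_eq_norm]
      linarith
    have huD : uhat ∈ ball uhat (2 * α + δ) := by
      rw [mem_ball, dist_self]
      linarith
    have := hβ' uhat huD x hxD
    rwa [norm_sub_rev uhat x] at this
  have lem : ∀ v w : X, ‖v - uhat‖ ≤ 2 * α → ‖w - uhat‖ ≤ 2 * α →
      ‖Φ v - Φ w‖ ≤ β / 2 * (‖v - uhat‖ + ‖w - uhat‖) * ‖v - w‖ :=
    fun v w hv hw => seg_est Φ Φ' hΦderiv uhat β (2 * α) hβ.le hΦbound v w hv hw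
  -- majorant sequence
  set t : ℕ → ℝ := fun n => Nat.rec 0 (fun _ r => α + β / 2 * r ^ 2) n with htdef
  have ht0 : t 0 = 0 := rfl
  have htsucc : ∀ n, t (n + 1) = α + β / 2 * (t n) ^ 2 := fun n => rfl
  have htρ : ∀ n, 0 ≤ t n ∧ t n ≤ ρ := by
    intro n
    induction n with
    | zero => exact ⟨le_refl 0, hρ0⟩
    | succ n ih =>
      rw [htsucc]
      constructor
      · nlinarith [ih.1, hβ.le, sq_nonneg (t n)]
      · have htt : t n ^ 2 ≤ ρ ^ 2 := by nlinarith [ih.1, ih.2]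
        have h2 : (0:ℝ) ≤ β / 2 * (ρ ^ 2 - t n ^ 2) :=
          mul_nonneg (by linarith [hβ.le]) (by linarith)
        linarith [hρfix]
  have htmono : ∀ n, t n ≤ t (n + 1) := by
    intro n
    induction n with
    | zero => rw [ht0, htsucc]; nlinarith [sq_nonneg (t 0), hβ.le, hα.le]
    | succ n ih =>
      rw [htsucc n, htsucc (n+1)]
      have h1 := (htρ n).1
      have h2 : t n ^ 2 ≤ t (n+1) ^ 2 := by nlinarith [ih, h1]
      have h3 : (0:ℝ) ≤ β / 2 * (t (n+1) ^ 2 - t n ^ 2) :=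
        mul_nonneg (by linarith [hβ.le]) (by linarith)
      linarith
  have htmono' : Monotone t := monotone_nat_of_le_succ htmono
  -- βtₙ ≤ 1 - 1/(n+1)
  have htβ : ∀ n : ℕ, β * t n ≤ 1 - 1 / (n + 1) := by
    intro n
    induction n with
    | zero => simp [ht0]
    | succ n ih =>
      have hcast : ((n+1 : ℕ):ℝ) + 1 = (n:ℝ) + 2 := by push_cast; ring
      rw [htsucc, hcast]
      have hc : (1:ℝ) ≤ (n:ℝ) + 1 := by
        have h0 : (0:ℝ) ≤ (n:ℝ) := Nat.cast_nonneg n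
        linarith
      have hc2 : (0:ℝ) < (n:ℝ) + 1 := by positivity
      have hc3 : (0:ℝ) < (n:ℝ) + 2 := by positivity
      have h1 : 0 ≤ β * t n := mul_nonneg hβ.le (htρ n).1
      have key : (1 - 1/((n:ℝ)+1))^2 ≤ 1 - 2/((n:ℝ)+2) := by
        have e : 1 - 2/((n:ℝ)+2) - (1 - 1/((n:ℝ)+1))^2
            = (n:ℝ) / (((n:ℝ)+1)^2 * ((n:ℝ)+2)) := by
          field_simp
          ring
        have hpos : (0:ℝ) ≤ (n:ℝ) / (((n:ℝ)+1)^2 * ((n:ℝ)+2)) := by positivity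
        linarith [e, hpos]
      have : (β * t n)^2 ≤ (1 - 1/((n:ℝ)+1))^2 := by
        apply sq_le_sq' _ ih
        nlinarith [ih, h1]
      have key' : (1 - 1/((n:ℝ)+1))^2 ≤ 1 - 2*(1/((n:ℝ)+2)) := by
        rw [show (1:ℝ) - 2*(1/((n:ℝ)+2)) = 1 - 2/((n:ℝ)+2) by ring]
        exact key
      have hfin : ∀ u w : ℝ, (1-u)^2 ≤ 1-2*w → (β * t n)^2 ≤ (1-u)^2 →
          β * (α + β/2 * t n ^ 2) ≤ 1 - w := by
        intro u w hk ht
        nlinarith [hαβ]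
      have := hfin (1/((n:ℝ)+1)) (1/((n:ℝ)+2)) key' this
      linarith [this]
  -- iterates
  set v : ℕ → X := fun n => Nat.rec uhat (fun _ x => Φ x) n with hvdef
  have hv0 : v 0 = uhat := rfl
  have hvsucc : ∀ n, v (n + 1) = Φ (v n) := fun n => rfl
  have hmain : ∀ n, ‖v (n + 1) - v n‖ ≤ t (n + 1) - t n ∧ ‖v n - uhat‖ ≤ t n := by
    intro n
    induction n with
    | zero =>
      constructor
      · have h1 : v (0+1) - v 0 = -(G (F uhat)) := by
          rw [hvsucc 0, hv0]
          show Φ uhat - uhat = -(G (F uhat))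
          rw [hΦdef]
          show uhat - G (F uhat) - uhat = -(G (F uhat))
          abel
        rw [h1, norm_neg, htsucc 0, ht0]
        simpa using hα'
      · rw [hv0, ht0]
        simp
    | succ n ih =>
      have hb : ‖v (n + 1) - uhat‖ ≤ t (n + 1) := by
        calc ‖v (n + 1) - uhat‖ = ‖(v (n + 1) - v n) + (v n - uhat)‖ := by rw [sub_add_sub_cancel]
          _ ≤ ‖v (n + 1) - v n‖ + ‖v n - uhat‖ := norm_add_le _ _
          _ ≤ (t (n + 1) - t n) + t n := add_le_add ih.1 ih.2
          _ = t (n + 1) := by ring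
      refine ⟨?_, hb⟩
      have h2α1 : ‖v (n + 1) - uhat‖ ≤ 2 * α := le_trans hb (le_trans (htρ (n+1)).2 hρ2α)
      have h2α0 : ‖v n - uhat‖ ≤ 2 * α := le_trans ih.2 (le_trans (htρ n).2 hρ2α)
      calc ‖v (n + 1 + 1) - v (n + 1)‖ = ‖Φ (v (n + 1)) - Φ (v n)‖ := by
            rw [hvsucc (n+1), hvsucc n]
        _ ≤ β / 2 * (‖v (n + 1) - uhat‖ + ‖v n - uhat‖) * ‖v (n + 1) - v n‖ :=
            lem _ _ h2α1 h2α0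
        _ ≤ β / 2 * (t (n + 1) + t n) * (t (n + 1) - t n) := by
            have h1 : 0 ≤ β / 2 * (‖v (n + 1) - uhat‖ + ‖v n - uhat‖) := by positivity
            have h2 : β / 2 * (‖v (n + 1) - uhat‖ + ‖v n - uhat‖) ≤
                β / 2 * (t (n + 1) + t n) := by
              exact mul_le_mul_of_nonneg_left (add_le_add hb ih.2)
                (by linarith [hβ.le] : (0:ℝ) ≤ β / 2)
            have h3 : 0 ≤ t (n + 1) - t n := by linarith [htmono n]
            calc β / 2 * (‖v (n + 1) - uhat‖ + ‖v n - uhat‖) * ‖v (n + 1) - v n‖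
                ≤ β / 2 * (‖v (n + 1) - uhat‖ + ‖v n - uhat‖) * (t (n + 1) - t n) :=
                  mul_le_mul_of_nonneg_left ih.1 h1
              _ ≤ β / 2 * (t (n + 1) + t n) * (t (n + 1) - t n) :=
                  mul_le_mul_of_nonneg_right h2 h3
        _ = t (n + 1 + 1) - t (n + 1) := by rw [htsucc (n+1), htsucc n]; ring
  -- t converges
  have htbdd : BddAbove (Set.range t) := ⟨ρ, by rintro _ ⟨n, rfl⟩; exact (htρ n).2⟩
  set L : ℝ := ⨆ n, t n with hLdef
  have htL : Filter.Tendsto t Filter.atTop (nhds L) := tendsto_atTop_ciSup htmono' htbdd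
  have htleL : ∀ n, t n ≤ L := fun n => le_ciSup htbdd n
  -- v is Cauchy
  have hdist : ∀ n m, n ≤ m → ‖v m - v n‖ ≤ t m - t n := by
    intro n m hnm
    induction m with
    | zero =>
      have : n = 0 := Nat.le_zero.1 hnm
      simp [this]
    | succ m ih =>
      rcases Nat.lt_or_ge n (m + 1) with h | h
      · have hnm' : n ≤ m := Nat.lt_succ_iff.1 h
        calc ‖v (m + 1) - v n‖ = ‖(v (m + 1) - v m) + (v m - v n)‖ := by rw [sub_add_sub_cancel]
          _ ≤ ‖v (m + 1) - v m‖ + ‖v m - v n‖ := norm_add_le _ _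
          _ ≤ (t (m + 1) - t m) + (t m - t n) := add_le_add (hmain m).1 (ih hnm')
          _ = t (m + 1) - t n := by ring
      · have : n = m + 1 := le_antisymm hnm h
        simp [this]
  have hcauchy : CauchySeq v := by
    apply cauchySeq_of_le_tendsto_0 (fun n => L - t n)
    · intro n m N hn hm
      rcases le_total n m with h | h
      · rw [dist_eq_norm, norm_sub_rev]
        calc ‖v m - v n‖ ≤ t m - t n := hdist n m h
          _ ≤ L - t N := by linarith [htleL m, htmono' hn]
      · rw [dist_eq_norm]
        calc ‖v n - v m‖ ≤ t n - t m := hdist m n h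
          _ ≤ L - t N := by linarith [htleL n, htmono' hm]
    · have : Filter.Tendsto (fun n => L - t n) Filter.atTop (nhds (L - L)) :=
        (tendsto_const_nhds).sub htL
      simpa using this
  obtain ⟨u, hu⟩ := cauchySeq_tendsto_of_complete hcauchy
  -- u in the closed ball
  have huball : u ∈ closedBall uhat ρ := by
    rw [mem_closedBall, dist_eq_norm]
    have h1 : Filter.Tendsto (fun n => ‖v n - uhat‖) Filter.atTop (nhds ‖u - uhat‖) :=
      ((hu.sub tendsto_const_nhds).norm)
    exact le_of_tendsto h1 (Filter.Eventually.of_forall fun n =>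
      le_trans (hmain n).2 (htρ n).2)
  -- u is a fixed point, hence a zero of F
  have hfix : Φ u = u := by
    have h1 : Filter.Tendsto (fun n => v (n + 1)) Filter.atTop (nhds u) :=
      hu.comp (Filter.tendsto_add_atTop_nat 1)
    have h2 : Filter.Tendsto (fun n => Φ (v n)) Filter.atTop (nhds (Φ u)) :=
      (hΦcont.tendsto u).comp hu
    have h3 : (fun n => v (n + 1)) = fun n => Φ (v n) := funext hvsucc
    rw [h3] at h1
    exact tendsto_nhds_unique h2 h1
  have hGFu : G (F u) = 0 := by
    have : u - G (F u) = u := hfix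
    have := sub_eq_self.mp this
    exact this
  have hFu : F u = 0 := by
    have h1 : F' uhat (G (F u)) = F u := hG₁ (F u)
    rw [hGFu] at h1
    rw [← h1]
    simp
  refine ⟨u, huball, hFu, ?_⟩
  -- uniqueness
  intro u' hu' hFu'
  rw [mem_closedBall, dist_eq_norm] at hu'
  have hfix' : Φ u' = u' := by
    rw [hΦdef]
    show u' - G (F u') = u'
    rw [hFu']
    simp
  -- one-step contraction estimate
  have hstep : ∀ n : ℕ, ‖u' - v (n + 1)‖ ≤ (1 - 1 / (2 * (n + 1))) * ‖u' - v n‖ := by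
    intro n
    have h2α0 : ‖v n - uhat‖ ≤ 2 * α := le_trans (hmain n).2 (le_trans (htρ _).2 hρ2α)
    have hq : β / 2 * (‖u' - uhat‖ + ‖v n - uhat‖) ≤ 1 - 1 / (2 * ((n:ℝ) + 1)) := by
      have h1 := htβ n
      have h2 := (hmain n).2
      have hc2 : (0:ℝ) < (n:ℝ) + 1 := by positivity
      have h3 : β * t n ≤ 1 - 1 / ((n:ℝ) + 1) := h1
      have h4 : β * ‖v n - uhat‖ ≤ 1 - 1 / ((n:ℝ) + 1) := by
        nlinarith [mul_le_mul_of_nonneg_left h2 hβ.le]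
      have h5 : β * ‖u' - uhat‖ ≤ 2 * α * β := by nlinarith [hβ.le]
      have h6 : 1 / (2 * ((n:ℝ) + 1)) = (1 / ((n:ℝ) + 1)) / 2 := by
        rw [div_div]
        ring_nf
      nlinarith [hαβ]
    calc ‖u' - v (n + 1)‖ = ‖Φ u' - Φ (v n)‖ := by rw [hfix', hvsucc]
      _ ≤ β / 2 * (‖u' - uhat‖ + ‖v n - uhat‖) * ‖u' - v n‖ := lem _ _ hu' h2α0
      _ ≤ (1 - 1 / (2 * ((n:ℝ) + 1))) * ‖u' - v n‖ :=
          mul_le_mul_of_nonneg_right hq (norm_nonneg _)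
  -- iterate the estimate
  have hprod : ∀ n : ℕ, ‖u' - v n‖ ≤
      (∏ k ∈ Finset.range n, (1 - 1 / (2 * ((k:ℝ) + 1)))) * ‖u' - uhat‖ := by
    intro n
    induction n with
    | zero => simp [hv0]
    | succ n ih =>
      have hfac : (0:ℝ) ≤ 1 - 1 / (2 * ((n:ℝ) + 1)) := by
        have hc2 : (1:ℝ) ≤ (n:ℝ) + 1 := by
          have h0 : (0:ℝ) ≤ (n:ℝ) := Nat.cast_nonneg n
          linarith
        have : 1 / (2 * ((n:ℝ) + 1)) ≤ 1 := by
          rw [div_le_one (by positivity)]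
          linarith
        linarith
      calc ‖u' - v (n + 1)‖ ≤ (1 - 1 / (2 * ((n:ℝ) + 1))) * ‖u' - v n‖ := hstep n
        _ ≤ (1 - 1 / (2 * ((n:ℝ) + 1))) *
            ((∏ k ∈ Finset.range n, (1 - 1 / (2 * ((k:ℝ) + 1)))) * ‖u' - uhat‖) :=
            mul_le_mul_of_nonneg_left ih hfac
        _ = (∏ k ∈ Finset.range (n + 1), (1 - 1 / (2 * ((k:ℝ) + 1)))) * ‖u' - uhat‖ := by
            rw [Finset.prod_range_succ]
            ring
  -- the product tends to zero
  have hP0 : Filter.Tendsto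
      (fun n => (∏ k ∈ Finset.range n, (1 - 1 / (2 * ((k:ℝ) + 1))))) Filter.atTop (nhds 0) := by
    have hPexp : ∀ n : ℕ, (∏ k ∈ Finset.range n, (1 - 1 / (2 * ((k:ℝ) + 1)))) ≤
        Real.exp (-(1/2) * ∑ k ∈ Finset.range n, 1 / ((k:ℝ) + 1)) := by
      intro n
      have : ∀ k ∈ Finset.range n, (1 - 1 / (2 * ((k:ℝ) + 1))) ≤
          Real.exp (-(1 / (2 * ((k:ℝ) + 1)))) := by
        intro k _
        have := Real.add_one_le_exp (-(1 / (2 * ((k:ℝ) + 1))))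
        linarith
      calc (∏ k ∈ Finset.range n, (1 - 1 / (2 * ((k:ℝ) + 1))))
          ≤ ∏ k ∈ Finset.range n, Real.exp (-(1 / (2 * ((k:ℝ) + 1)))) := by
            apply Finset.prod_le_prod
            · intro k _
              have hc2 : (1:ℝ) ≤ (k:ℝ) + 1 := by
                have h0 : (0:ℝ) ≤ (k:ℝ) := Nat.cast_nonneg k
                linarith
              have : 1 / (2 * ((k:ℝ) + 1)) ≤ 1 := by
                rw [div_le_one (by positivity)]
                linarith
              linarith
            · exact this
        _ = Real.exp (∑ k ∈ Finset.range n, -(1 / (2 * ((k:ℝ) + 1)))) :=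
            (Real.exp_sum _ _).symm
        _ = Real.exp (-(1/2) * ∑ k ∈ Finset.range n, 1 / ((k:ℝ) + 1)) := by
            congr 1
            rw [Finset.mul_sum]
            apply Finset.sum_congr rfl
            intro k _
            field_simp
    have hsum : Filter.Tendsto (fun n => ∑ k ∈ Finset.range n, 1 / ((k:ℝ) + 1))
        Filter.atTop Filter.atTop := by
      exact Real.tendsto_sum_range_one_div_nat_succ_atTop
    have hexp : Filter.Tendsto
        (fun n => Real.exp (-(1/2) * ∑ k ∈ Finset.range n, 1 / ((k:ℝ) + 1)))
        Filter.atTop (nhds 0) := by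
      apply Real.tendsto_exp_atBot.comp
      apply Filter.Tendsto.const_mul_atTop_of_neg (by norm_num) hsum
    have hPnonneg : ∀ n : ℕ, 0 ≤ ∏ k ∈ Finset.range n, (1 - 1 / (2 * ((k:ℝ) + 1))) := by
      intro n
      apply Finset.prod_nonneg
      intro k _
      have hc2 : (1:ℝ) ≤ (k:ℝ) + 1 := by
        have h0 : (0:ℝ) ≤ (k:ℝ) := Nat.cast_nonneg k
        linarith
      have : 1 / (2 * ((k:ℝ) + 1)) ≤ 1 := by
        rw [div_le_one (by positivity)]
        linarith
      linarith
    exact squeeze_zero hPnonneg hPexp hexp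
  -- conclude
  have hnorm0 : Filter.Tendsto (fun n => ‖u' - v n‖) Filter.atTop (nhds 0) := by
    apply squeeze_zero (fun n => norm_nonneg _) hprod
    simpa using hP0.mul_const ‖u' - uhat‖
  have hvu' : Filter.Tendsto v Filter.atTop (nhds u') := by
    rw [tendsto_iff_norm_sub_tendsto_zero]
    simpa [norm_sub_rev] using hnorm0
  exact tendsto_nhds_unique hvu' hu
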